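/- Let β > 0, D ≥ 0, S ⊆ ℝⁿ, let C₌ be any set and C_≤ ⊆ ℝⁿ, and let F : ℝⁿ → ℝⁿ be monotone on S. Let sequences x, y, λ : ℕ → ℝⁿ satisfy for all k ≥ 0: x_{k+1} ∈ S; λ_{k+1} = λ_k + β(x_{k+1} − y_{k+1}); −λ_k − β(x_{k+1} − y_k) is a subgradient of x ↦ ⟨F(x_{k+1}), x⟩ at x_{k+1} relative to S; y_k ∈ C_≤; and λ_k lies in the normal cone of C_≤ at y_k, i.e. ⟨λ_k, z − y_k⟩ ≤ 0 for all z ∈ C_≤. Assume (x^⋆, λ^⋆) is a KKT pair of the original problem: x^⋆ ∈ S ∩ C_≤, −λ^⋆ is a subgradient of x ↦ ⟨F(x^⋆), x⟩ at x^⋆ relative to S, and ⟨λ^⋆, z − x^⋆⟩ ≤ 0 for all z ∈ C_≤. Fix K ∈ ℕ and assume (x_K^⋆, λ_K^⋆) is a KKT pair for F evaluated at x_{K+1}: x_K^⋆ ∈ S ∩ C_≤, −λ_K^⋆ is a subgradient of x ↦ ⟨F(x_{K+1}), x⟩ at x_K^⋆ relative to S, ⟨λ_K^⋆, z − x_K^⋆⟩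 ≤ 0 for all z ∈ C_≤, and ‖x^⋆ − x_K^⋆‖ ≤ D. Set Δ := (1/β)‖λ_0 − λ^⋆‖² + β‖y_0 − x^⋆‖². Then for every x ∈ S ∩ C_≤: ⟨F(x_{K+1}), x_{K+1} − x⟩ ≤ Δ/(K+1) + (2√Δ + ‖λ^⋆‖/√β + √β·D)·√(Δ/(K+1)), and moreover ‖x_{K+1} − y_{K+1}‖ ≤ √(Δ/(β(K+1))). -/

import Mathlib

open scoped RealInnerProductSpace

section helpers
variable {E : Type*} [NormedAddCommGroup E] [InnerProductSpace ℝ E]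

private lemma key1' (a b c : E) : ⟪a - c, a - b⟫ = (‖a-c‖^2 - ‖b-c‖^2 + ‖a-b‖^2)/2 := by
  rw [← real_inner_self_eq_norm_sq, ← real_inner_self_eq_norm_sq, ← real_inner_self_eq_norm_sq]
  simp only [inner_sub_left, inner_sub_right]
  rw [real_inner_comm b a, real_inner_comm c a, real_inner_comm c b]
  ring

private lemma amgm' (β a b : ℝ) (hβ : 0 < β) : 2 * (a * b) ≤ β * a^2 + β⁻¹ * b^2 := by
  have h1 : Real.sqrt β ^2 = β := Real.sq_sqrt hβ.le
  have h2 : Real.sqrt β⁻¹ ^2 = β⁻¹ := Real.sq_sqrt (inv_nonneg.2 hβ.le)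
  have h3 : Real.sqrt β * Real.sqrt β⁻¹ = 1 := by
    rw [← Real.sqrt_mul hβ.le, mul_inv_cancel₀ hβ.ne', Real.sqrt_one]
  have e1 : Real.sqrt β^2 * a^2 = β * a^2 := by rw [h1]
  have e2 : Real.sqrt β⁻¹^2 * b^2 = β⁻¹ * b^2 := by rw [h2]
  have e3 : Real.sqrt β * Real.sqrt β⁻¹ * (a*b) = a*b := by rw [h3]; ring
  nlinarith [sq_nonneg (Real.sqrt β * a - Real.sqrt β⁻¹ * b)]

private lemma sub_ineq' (a w z x : E) (h : ⟪a, z⟫ ≥ ⟪a, x⟫ + ⟪w, z - x⟫) :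
    0 ≤ ⟪a - w, z - x⟫ := by
  simp only [inner_sub_left, inner_sub_right] at *
  linarith

private lemma nc' (u v a b : E) (h1 : ⟪u, b - a⟫ ≤ 0) (h2 : ⟪v, a - b⟫ ≤ 0) :
    0 ≤ ⟪u - v, a - b⟫ := by
  have h3 : 0 ≤ ⟪u, a - b⟫ := by
    rw [show a - b = -(b-a) by abel, inner_neg_right]; linarith
  rw [inner_sub_left]; linarith

private lemma descent_algebra' (β : ℝ) (hβ : 0 < β) (l1 l0 ls y1 y0 ys x1 : E)
    (hx : x1 - y1 = β⁻¹ • (l1 - l0))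
    (hiv : ⟪l1 - ls + β • (y1 - y0), x1 - ys⟫ ≤ 0)
    (hv : 0 ≤ ⟪l1 - ls, y1 - ys⟫)
    (hvi : 0 ≤ ⟪l1 - l0, y1 - y0⟫) :
    (1/β)*‖l1-ls‖^2 + β*‖y1-ys‖^2 + ((1/β)*‖l1-l0‖^2 + β*‖y1-y0‖^2)
      ≤ (1/β)*‖l0-ls‖^2 + β*‖y0-ys‖^2 := by
  have hd : x1 - ys = (y1 - ys) + β⁻¹ • (l1 - l0) := by rw [← hx]; abel
  rw [hd] at hiv
  simp only [inner_add_left, inner_add_right, real_inner_smul_left, real_inner_smul_right,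
    inv_mul_cancel_left₀ hβ.ne'] at hiv
  have c1 : ⟪y1 - y0, y1 - ys⟫ = ⟪y1 - ys, y1 - y0⟫ := real_inner_comm _ _
  have c2 : ⟪y1 - y0, l1 - l0⟫ = ⟪l1 - l0, y1 - y0⟫ := real_inner_comm _ _
  rw [c1, c2, key1' l1 l0 ls, key1' y1 y0 ys] at hiv
  simp only [one_div]
  linarith [hv, hvi, hiv]

private lemma mono_algebra' (β : ℝ) (hβ : 0 < β) (p q s t : E)
    (h : 0 ≤ ⟪-q + β • (s - t), t + β⁻¹ • (q - p)⟫)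
    (hqt : 0 ≤ ⟪q, t⟫) :
    (1/β)*‖q‖^2 + β*‖t‖^2 ≤ (1/β)*‖p‖^2 + β*‖s‖^2 := by
  simp only [inner_add_left, inner_add_right, real_inner_smul_left, real_inner_smul_right,
    inner_neg_left, inv_mul_cancel_left₀ hβ.ne'] at h
  have c1 : ⟪s - t, t⟫ = -⟪t, t - s⟫ := by
    simp only [inner_sub_left, inner_sub_right]
    rw [real_inner_comm s t]; ring
  have e1 := key1' q p (0 : E)
  have e2 := key1' t s (0 : E)
  simp only [sub_zero] at e1 e2
  rw [c1, e2, e1] at h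
  have hcs : ⟪s - t, q - p⟫ ≤ ‖s - t‖ * ‖q - p‖ := real_inner_le_norm _ _
  have hst : β * ‖s - t‖^2 = β * ‖t - s‖^2 := by rw [norm_sub_rev]
  have hamgm := amgm' β (‖s - t‖) (‖q - p‖) hβ
  simp only [one_div]
  linarith [hqt, h, hcs, hamgm, hst]

end helpers

set_option maxHeartbeats 1600000 in
/-- Theorem: last-iterate rate of P-ACVI: the barrier is replaced by
projection onto `Cle`, encoded by `y k ∈ Cle` and `λ k` in the normal cone of
`Cle` at `y k`. -/
theorem stmt9 {n : ℕ} (β D : ℝ) (hβ : 0 < β) (hD : 0 ≤ D)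
    (S Cle : Set (EuclideanSpace ℝ (Fin n)))
    (F : EuclideanSpace ℝ (Fin n) → EuclideanSpace ℝ (Fin n))
    (x y lam : ℕ → EuclideanSpace ℝ (Fin n))
    (hmono : ∀ u ∈ S, ∀ v ∈ S, 0 ≤ ⟪F u - F v, u - v⟫)
    (hxS : ∀ k, x (k+1) ∈ S)
    (hlam : ∀ k, lam (k+1) = lam k + β • (x (k+1) - y (k+1)))
    (hfsub : ∀ k, ∀ z ∈ S,
      ⟪F (x (k+1)), z⟫ ≥ ⟪F (x (k+1)), x (k+1)⟫
        + ⟪-(lam k) - β • (x (k+1) - y k), z - x (k+1)⟫)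
    (hyC : ∀ k, y k ∈ Cle)
    (hnormal : ∀ k, ∀ z ∈ Cle, ⟪lam k, z - y k⟫ ≤ 0)
    (xs lams : EuclideanSpace ℝ (Fin n))
    (hxsS : xs ∈ S) (hxsC : xs ∈ Cle)
    (hfs : ∀ z ∈ S, ⟪F xs, z⟫ ≥ ⟪F xs, xs⟫ + ⟪-lams, z - xs⟫)
    (hns : ∀ z ∈ Cle, ⟪lams, z - xs⟫ ≤ 0)
    (K : ℕ) (xK lamK : EuclideanSpace ℝ (Fin n))
    (hxKS : xK ∈ S) (hxKC : xK ∈ Cle)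
    (hfK : ∀ z ∈ S, ⟪F (x (K+1)), z⟫ ≥ ⟪F (x (K+1)), xK⟫ + ⟪-lamK, z - xK⟫)
    (hnK : ∀ z ∈ Cle, ⟪lamK, z - xK⟫ ≤ 0)
    (hdist : ‖xs - xK‖ ≤ D) :
    (∀ xx ∈ S ∩ Cle,
      ⟪F (x (K+1)), x (K+1) - xx⟫
        ≤ ((1/β) * ‖lam 0 - lams‖^2 + β * ‖y 0 - xs‖^2) / (K+1)
          + (2 * Real.sqrt ((1/β) * ‖lam 0 - lams‖^2 + β * ‖y 0 - xs‖^2)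
              + ‖lams‖ / Real.sqrt β + Real.sqrt β * D)
            * Real.sqrt (((1/β) * ‖lam 0 - lams‖^2 + β * ‖y 0 - xs‖^2) / (K+1))) ∧
    ‖x (K+1) - y (K+1)‖
      ≤ Real.sqrt (((1/β) * ‖lam 0 - lams‖^2 + β * ‖y 0 - xs‖^2) / (β * (K+1))) := by
  -- abbreviations
  set Δ : ℝ := (1/β) * ‖lam 0 - lams‖^2 + β * ‖y 0 - xs‖^2 with hΔdef
  set V : ℕ → ℝ := fun k => (1/β) * ‖lam k - lams‖^2 + β * ‖y k - xs‖^2 with hVdef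
  set a : ℕ → ℝ := fun k => (1/β) * ‖lam (k+1) - lam k‖^2 + β * ‖y (k+1) - y k‖^2 with hadef
  -- basic vector identities
  have hp : ∀ k, x (k+1) - y (k+1) = β⁻¹ • (lam (k+1) - lam k) := by
    intro k
    rw [hlam k, add_sub_cancel_left, smul_smul, inv_mul_cancel₀ hβ.ne', one_smul]
  have hw : ∀ k, -(lam k) - β • (x (k+1) - y k)
      = -(lam (k+1) + β • (y (k+1) - y k)) := by
    intro k
    rw [hlam k]
    simp only [smul_sub]
    abel
  -- descent inequality
  have hdesc : ∀ k, V (k+1) + a k ≤ V k := by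
    intro k
    have g1 := sub_ineq' _ _ _ _ (hfsub k xs hxsS)
    have g2 := sub_ineq' _ _ _ _ (hfs (x (k+1)) (hxS k))
    have g3 := hmono (x (k+1)) (hxS k) xs hxsS
    have g1' : ⟪F (x (k+1)) - (-(lam k) - β • (x (k+1) - y k)), x (k+1) - xs⟫ ≤ 0 := by
      rw [show x (k+1) - xs = -(xs - x (k+1)) by abel, inner_neg_right]
      linarith
    have hiv : ⟪lam (k+1) - lams + β • (y (k+1) - y k), x (k+1) - xs⟫ ≤ 0 := by
      have hid : lam (k+1) - lams + β • (y (k+1) - y k)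
          = (F (x (k+1)) - (-(lam k) - β • (x (k+1) - y k)))
            - (F (x (k+1)) - F xs) - (F xs - (-lams)) := by
        rw [hw k]; abel
      rw [hid, inner_sub_left, inner_sub_left]
      linarith
    have hv := nc' (lam (k+1)) lams (y (k+1)) xs (hnormal (k+1) xs hxsC)
      (hns (y (k+1)) (hyC (k+1)))
    have hvi := nc' (lam (k+1)) (lam k) (y (k+1)) (y k) (hnormal (k+1) (y k) (hyC k))
      (hnormal k (y (k+1)) (hyC (k+1)))
    exact descent_algebra' β hβ (lam (k+1)) (lam k) lams (y (k+1)) (y k) xs (x (k+1))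
      (hp k) hiv hv hvi
  -- residuals are monotone
  have hmonoa : ∀ k, a (k+1) ≤ a k := by
    intro k
    have g1 := sub_ineq' _ _ _ _ (hfsub k (x (k+2)) (hxS (k+1)))
    have g2 := sub_ineq' _ _ _ _ (hfsub (k+1) (x (k+1)) (hxS k))
    have g3 := hmono (x (k+2)) (hxS (k+1)) (x (k+1)) (hxS k)
    have g2' : ⟪F (x (k+2)) - (-(lam (k+1)) - β • (x (k+2) - y (k+1))),
        x (k+2) - x (k+1)⟫ ≤ 0 := by
      rw [show x (k+2) - x (k+1) = -(x (k+1) - x (k+2)) by abel, inner_neg_right]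
      linarith
    have h : 0 ≤ ⟪-(lam (k+2) - lam (k+1)) + β • ((y (k+1) - y k) - (y (k+2) - y (k+1))),
        x (k+2) - x (k+1)⟫ := by
      have hid : -(lam (k+2) - lam (k+1)) + β • ((y (k+1) - y k) - (y (k+2) - y (k+1)))
          = (F (x (k+1)) - (-(lam k) - β • (x (k+1) - y k)))
            + (F (x (k+2)) - F (x (k+1)))
            - (F (x (k+2)) - (-(lam (k+1)) - β • (x (k+2) - y (k+1)))) := by
        rw [show (-(lam k) - β • (x (k+1) - y k)) = -(lam (k+1) + β • (y (k+1) - y k)) from hw k,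
          show (-(lam (k+1)) - β • (x (k+2) - y (k+1))) = -(lam (k+2) + β • (y (k+2) - y (k+1))) from hw (k+1)]
        simp only [smul_sub]
        abel
      rw [hid, inner_sub_left, inner_add_left]
      linarith
    have hd : x (k+2) - x (k+1)
        = (y (k+2) - y (k+1)) + β⁻¹ • ((lam (k+2) - lam (k+1)) - (lam (k+1) - lam k)) := by
      have h1 := hp k
      have h2 := hp (k+1)
      have : x (k+2) - x (k+1) = (x (k+2) - y (k+2)) + (y (k+2) - y (k+1)) - (x (k+1) - y (k+1)) := by
        abel
      rw [this, h1, h2]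
      module
    rw [hd] at h
    have hqt := nc' (lam (k+2)) (lam (k+1)) (y (k+2)) (y (k+1))
      (hnormal (k+2) (y (k+1)) (hyC (k+1))) (hnormal (k+1) (y (k+2)) (hyC (k+2)))
    exact mono_algebra' β hβ (lam (k+1) - lam k) (lam (k+2) - lam (k+1))
      (y (k+1) - y k) (y (k+2) - y (k+1)) h hqt
  -- nonnegativity
  have hb' : (0:ℝ) < 1/β := by positivity
  have hVn : ∀ k, 0 ≤ V k := by intro k; simp only [hVdef]; positivity
  have han : ∀ k, 0 ≤ a k := by intro k; simp only [hadef]; positivity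
  -- summed bound
  have hsum : ∀ m : ℕ, V (m+1) + ((m:ℝ)+1) * a m ≤ V 0 := by
    intro m
    induction m with
    | zero => simpa using hdesc 0
    | succ m ih =>
      have h1 := hdesc (m+1)
      have h2 := hmonoa m
      have h3 : ((m:ℝ)+1) * a (m+1) ≤ ((m:ℝ)+1) * a m := by
        apply mul_le_mul_of_nonneg_left h2 (by positivity)
      push_cast
      push_cast at ih
      linarith
  have hV0 : V 0 = Δ := rfl
  clear_value Δ
  have hKsum : V (K+1) + ((K:ℝ)+1) * a K ≤ Δ := by rw [← hV0]; exact hsum K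
  have hVK : V (K+1) ≤ Δ := by
    have := han K
    nlinarith [hKsum, mul_nonneg (by positivity : (0:ℝ) ≤ (K:ℝ)+1) (han K)]
  have haK : ((K:ℝ)+1) * a K ≤ Δ := by linarith [hVn (K+1)]
  -- square-root abbreviations
  have hΔ0 : (0:ℝ) ≤ Δ := hV0 ▸ hVn 0
  have hK1 : (0:ℝ) < (K:ℝ)+1 := by positivity
  set sβ := Real.sqrt β with hsβdef
  set sΔ := Real.sqrt Δ with hsΔdef
  set tt := Real.sqrt (Δ/((K:ℝ)+1)) with httdef
  have hsβ : sβ ^ 2 = β := Real.sq_sqrt hβ.le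
  have hsβ0 : 0 < sβ := Real.sqrt_pos.2 hβ
  have hsΔ : sΔ ^ 2 = Δ := Real.sq_sqrt hΔ0
  have hsΔ0 : 0 ≤ sΔ := Real.sqrt_nonneg _
  have htt : tt ^ 2 = Δ/((K:ℝ)+1) := Real.sq_sqrt (by positivity)
  have htt0 : 0 ≤ tt := Real.sqrt_nonneg _
  clear_value sβ sΔ tt
  have sqle : ∀ v c : ℝ, 0 ≤ v → 0 ≤ c → v^2 ≤ c^2 → v ≤ c := by
    intro v c hv hc h; nlinarith
  -- bound on a K
  have hlx : lam (K+1) - lam K = β • (x (K+1) - y (K+1)) := by rw [hlam K]; abel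
  have hnx : ‖lam (K+1) - lam K‖^2 = β^2 * ‖x (K+1) - y (K+1)‖^2 := by
    rw [hlx, norm_smul, Real.norm_eq_abs, abs_of_pos hβ, mul_pow]
  have haKval : a K = β * ‖x (K+1) - y (K+1)‖^2 + β * ‖y (K+1) - y K‖^2 := by
    simp only [hadef]
    rw [hnx]
    field_simp
  have h' : ((K:ℝ)+1) * (β * ‖x (K+1) - y (K+1)‖^2 + β * ‖y (K+1) - y K‖^2) ≤ Δ := by
    rw [← haKval]; exact haK
  have hxy2 : ‖x (K+1) - y (K+1)‖^2 ≤ Δ/(β*((K:ℝ)+1)) := by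
    rw [le_div_iff₀ (by positivity)]
    linarith [h', mul_nonneg (mul_nonneg hK1.le hβ.le) (sq_nonneg ‖y (K+1) - y K‖)]
  have hyy2 : ‖y (K+1) - y K‖^2 ≤ Δ/(β*((K:ℝ)+1)) := by
    rw [le_div_iff₀ (by positivity)]
    linarith [h', mul_nonneg (mul_nonneg hK1.le hβ.le) (sq_nonneg ‖x (K+1) - y (K+1)‖)]
  have claim2 : ‖x (K+1) - y (K+1)‖ ≤ Real.sqrt (Δ/(β*((K:ℝ)+1))) := by
    calc ‖x (K+1) - y (K+1)‖ = Real.sqrt (‖x (K+1) - y (K+1)‖^2) :=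
          (Real.sqrt_sq (norm_nonneg _)).symm
      _ ≤ _ := Real.sqrt_le_sqrt hxy2
  have hdb : Δ/(β*((K:ℝ)+1)) = (tt/sβ)^2 := by
    rw [div_pow, htt, hsβ, div_div, mul_comm]
  have httsb : 0 ≤ tt/sβ := div_nonneg htt0 hsβ0.le
  have b1 : ‖y (K+1) - x (K+1)‖ ≤ tt/sβ := by
    apply sqle _ _ (norm_nonneg _) httsb
    rw [← hdb, norm_sub_rev]; exact hxy2
  have b2 : ‖y (K+1) - y K‖ ≤ tt/sβ := by
    apply sqle _ _ (norm_nonneg _) httsb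
    rw [← hdb]; exact hyy2
  -- bounds from V (K+1) ≤ Δ
  have hVKexp : (1/β) * ‖lam (K+1) - lams‖^2 + β * ‖y (K+1) - xs‖^2 ≤ Δ := hVK
  have hL1 : (1/β) * ‖lam (K+1) - lams‖^2 ≤ Δ := by
    linarith [hVKexp, mul_nonneg hβ.le (sq_nonneg ‖y (K+1) - xs‖)]
  have hL2 : ‖lam (K+1) - lams‖^2 ≤ β * Δ := by
    have h5 := mul_le_mul_of_nonneg_left hL1 hβ.le
    rwa [show β * ((1/β) * ‖lam (K+1) - lams‖^2) = ‖lam (K+1) - lams‖^2 by field_simp] at h5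
  have blam : ‖lam (K+1) - lams‖ ≤ sβ * sΔ := by
    apply sqle _ _ (norm_nonneg _) (by positivity)
    rw [mul_pow, hsβ, hsΔ]; exact hL2
  have blamnorm : ‖lam (K+1)‖ ≤ ‖lams‖ + sβ * sΔ := by
    calc ‖lam (K+1)‖ = ‖lams + (lam (K+1) - lams)‖ := by congr 1; abel
      _ ≤ ‖lams‖ + ‖lam (K+1) - lams‖ := norm_add_le _ _
      _ ≤ _ := by linarith
  have hY1 : β * ‖y (K+1) - xs‖^2 ≤ Δ := by
    have h9 : (0:ℝ) ≤ 1/β * ‖lam (K+1) - lams‖^2 := by positivity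
    linarith [hVKexp, h9]
  have byx : ‖y (K+1) - xs‖ ≤ sΔ/sβ := by
    apply sqle _ _ (norm_nonneg _) (by positivity)
    rw [div_pow, hsβ, hsΔ, le_div_iff₀ hβ]
    linarith
  have b4 : ‖xK - x (K+1)‖ ≤ D + sΔ/sβ + tt/sβ := by
    calc ‖xK - x (K+1)‖ = ‖(xK - xs) + ((xs - y (K+1)) + (y (K+1) - x (K+1)))‖ := by
          congr 1; abel
      _ ≤ ‖xK - xs‖ + ‖(xs - y (K+1)) + (y (K+1) - x (K+1))‖ := norm_add_le _ _
      _ ≤ ‖xK - xs‖ + (‖xs - y (K+1)‖ + ‖y (K+1) - x (K+1)‖) := by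
          linarith [norm_add_le (xs - y (K+1)) (y (K+1) - x (K+1))]
      _ ≤ D + sΔ/sβ + tt/sβ := by
          rw [norm_sub_rev xK xs, norm_sub_rev xs (y (K+1))]
          linarith
  constructor
  · intro xx hxx
    obtain ⟨hxxS, hxxC⟩ := hxx
    have h1 := sub_ineq' _ _ _ _ (hfK xx hxxS)
    have h2 := hnK xx hxxC
    have h3 : 0 ≤ ⟪F (x (K+1)), xx - xK⟫ := by
      rw [inner_sub_left, inner_neg_left] at h1; linarith
    have hA : ⟪F (x (K+1)), x (K+1) - xx⟫ ≤ ⟪F (x (K+1)), x (K+1) - xK⟫ := by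
      have h4 : ⟪F (x (K+1)), x (K+1) - xx⟫
          = ⟪F (x (K+1)), x (K+1) - xK⟫ - ⟪F (x (K+1)), xx - xK⟫ := by
        rw [← inner_sub_right]; congr 1; abel
      rw [h4]; linarith
    have hB : ⟪F (x (K+1)), x (K+1) - xK⟫
        ≤ ⟪lam (K+1), xK - y (K+1)⟫ + ⟪lam (K+1), y (K+1) - x (K+1)⟫
          + β * ⟪y (K+1) - y K, xK - x (K+1)⟫ := by
      have g1 := sub_ineq' _ _ _ _ (hfsub K xK hxKS)
      rw [hw K] at g1
      rw [sub_neg_eq_add, inner_add_left, inner_add_left, real_inner_smul_left] at g1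
      have e : ⟪lam (K+1), xK - x (K+1)⟫
          = ⟪lam (K+1), xK - y (K+1)⟫ + ⟪lam (K+1), y (K+1) - x (K+1)⟫ := by
        rw [← inner_add_right]; congr 1; abel
      have e2 : ⟪F (x (K+1)), x (K+1) - xK⟫ = -⟪F (x (K+1)), xK - x (K+1)⟫ := by
        rw [← inner_neg_right]; congr 1; abel
      rw [e] at g1
      rw [e2]
      linarith
    have hC1 := hnormal (K+1) xK hxKC
    have hC2 : ⟪lam (K+1), y (K+1) - x (K+1)⟫ ≤ (‖lams‖ + sβ * sΔ) * (tt/sβ) :=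
      le_trans (real_inner_le_norm _ _)
        (mul_le_mul blamnorm b1 (norm_nonneg _) (by positivity))
    have hC3 : ⟪y (K+1) - y K, xK - x (K+1)⟫ ≤ (tt/sβ) * (D + sΔ/sβ + tt/sβ) :=
      le_trans (real_inner_le_norm _ _)
        (mul_le_mul b2 b4 (norm_nonneg _) (by positivity))
    have hC3' := mul_le_mul_of_nonneg_left hC3 hβ.le
    have hfinal : (‖lams‖ + sβ * sΔ) * (tt/sβ) + β * ((tt/sβ) * (D + sΔ/sβ + tt/sβ))
        = Δ/((K:ℝ)+1) + (2*sΔ + ‖lams‖/sβ + sβ*D) * tt := by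
      rw [← htt, ← hsβ]
      field_simp
      ring
    linarith
  · exact claim2
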